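/- The Camassa–Holm equation (v - (ε²/8)v_xx)_t = v v_x - (ε²/12)v_x v_xx - (ε²/24)v v_xxx has the Lax pair representation: the compatibility condition of ε²φ_xx = (2 - (8v - ε²v_xx)/(2λ))φ and φ_t = (1/3)(λ+v)φ_x - (v_x/6)φ holds identically in λ if and only if u = v - (ε²/8)v_xx evolves by u_t = v v_x - (ε²/12)v_x v_xx - (ε²/24)v v_xxx; i.e., cross-differentiating the two linear equations (∂_t of the first equals ∂_x² applied appropriately to the second) yields exactly the Camassa–Holm equation. -/

import Mathlib

open MeasureTheory intervalIntegral Set Filter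

/-- Fubini for iterated interval integrals of a jointly continuous function,
proved by differentiating both sides in the upper limit `t`. -/
lemma swap_interval_integral (h : ℝ → ℝ → ℝ)
    (hhc : Continuous fun q : ℝ × ℝ => h q.1 q.2) (x t : ℝ) :
    (∫ y in (0:ℝ)..x, ∫ s in (0:ℝ)..t, h y s) =
      ∫ s in (0:ℝ)..t, ∫ y in (0:ℝ)..x, h y s := by
  have hcy : ∀ y, Continuous fun s => h y s := fun y =>
    hhc.comp (Continuous.prodMk_right y)
  have hcs : ∀ s, Continuous fun y => h y s := fun s =>
    hhc.comp (Continuous.prodMk_left s)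
  have hG : Continuous fun s => ∫ y in (0:ℝ)..x, h y s := by
    apply intervalIntegral.continuous_parametric_intervalIntegral_of_continuous'
      (μ := volume) (f := fun s y => h y s)
    exact hhc.comp continuous_swap
  have hH : ∀ t' : ℝ, Continuous fun y => ∫ s in (0:ℝ)..t', h y s := by
    intro t'
    exact intervalIntegral.continuous_parametric_intervalIntegral_of_continuous'
      (μ := volume) (f := fun y s => h y s) hhc 0 t'
  set L := fun r : ℝ => ∫ y in (0:ℝ)..x, ∫ s in (0:ℝ)..r, h y s with hLdef
  set R := fun r : ℝ => ∫ s in (0:ℝ)..r, ∫ y in (0:ℝ)..x, h y s with hRdef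
  have hRd : ∀ r : ℝ, HasDerivAt R (∫ y in (0:ℝ)..x, h y r) r := fun r =>
    (hG.integral_hasStrictDerivAt 0 r).hasDerivAt
  have hLd : ∀ r : ℝ, HasDerivAt L (∫ y in (0:ℝ)..x, h y r) r := by
    intro r
    obtain ⟨C, hC⟩ := (isCompact_uIcc (a := (0:ℝ)) (b := x)).prod
      (isCompact_Icc (a := r - 1) (b := r + 1)) |>.exists_bound_of_continuousOn
      hhc.continuousOn
    have := intervalIntegral.hasDerivAt_integral_of_dominated_loc_of_deriv_le
      (F := fun r' y => ∫ s in (0:ℝ)..r', h y s) (F' := fun r' y => h y r')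
      (bound := fun _ => C) (a := 0) (b := x) (μ := volume) (x₀ := r)
      (s := Metric.ball r 1) (Metric.ball_mem_nhds r zero_lt_one)
      (Eventually.of_forall fun t' => ((hH t').aestronglyMeasurable))
      ((hH r).intervalIntegrable 0 x)
      ((hcs r).aestronglyMeasurable)
      (Eventually.of_forall fun y hy => fun r' hr' => by
        have : (y, r') ∈ uIcc (0:ℝ) x ×ˢ Icc (r - 1) (r + 1) := by
          constructor
          · exact uIoc_subset_uIcc hy
          · have := Metric.mem_ball.mp hr'
            rw [Real.dist_eq] at this
            constructor <;> [linarith [abs_lt.mp this]; linarith [abs_lt.mp this]]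
        exact hC (y, r') this)
      (intervalIntegrable_const)
      (Eventually.of_forall fun y hy => fun r' hr' =>
        ((hcy y).integral_hasStrictDerivAt 0 r').hasDerivAt)
    exact this.2
  have hconst : ∀ r : ℝ, L r - R r = L 0 - R 0 := by
    intro r
    have hD : ∀ u : ℝ, HasDerivAt (fun w => L w - R w) 0 u := fun u => by
      have := (hLd u).sub (hRd u); rw [sub_self] at this; exact this
    exact is_const_of_deriv_eq_zero (fun u => (hD u).differentiableAt)
      (fun u => (hD u).deriv) r 0
  have hL0 : L 0 = 0 := by simp [hLdef]
  have hR0 : R 0 = 0 := by simp [hRdef]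
  have := hconst t
  rw [hL0, hR0] at this
  have : L t = R t := by linarith
  exact this

/-- Clairaut/Schwarz: if `g` is the `t`-partial of `f`, `h` the `x`-partial of `g`,
`k` the `x`-partial of `f`, with `g, h` continuous, then `h` is also the
`t`-partial of `k`. -/
lemma clairaut_swap (f g h k : ℝ → ℝ → ℝ)
    (hg : ∀ x t, HasDerivAt (fun s => f x s) (g x t) t)
    (hh : ∀ x t, HasDerivAt (fun y => g y t) (h x t) x)
    (hk : ∀ x t, HasDerivAt (fun y => f y t) (k x t) x)
    (hgc : Continuous fun q : ℝ × ℝ => g q.1 q.2)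
    (hhc : Continuous fun q : ℝ × ℝ => h q.1 q.2) :
    ∀ x t, HasDerivAt (fun s => k x s) (h x t) t := by
  have hcg_t : ∀ x, Continuous fun s => g x s := fun x =>
    hgc.comp (Continuous.prodMk_right x)
  have hch_t : ∀ x, Continuous fun s => h x s := fun x =>
    hhc.comp (Continuous.prodMk_right x)
  have hch_x : ∀ t, Continuous fun y => h y t := fun t =>
    hhc.comp (Continuous.prodMk_left t)
  have A : ∀ x t, (∫ y in (0:ℝ)..x, h y t) = g x t - g 0 t := fun x t =>
    intervalIntegral.integral_eq_sub_of_hasDerivAt (fun u _ => hh u t)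
      ((hch_x t).intervalIntegrable 0 x)
  have B : ∀ x t, (∫ s in (0:ℝ)..t, g x s) = f x t - f x 0 := fun x t =>
    intervalIntegral.integral_eq_sub_of_hasDerivAt (fun u _ => hg x u)
      ((hcg_t x).intervalIntegrable 0 t)
  have M : ∀ x t, (∫ y in (0:ℝ)..x, ∫ s in (0:ℝ)..t, h y s)
      = (f x t - f x 0) - (f 0 t - f 0 0) := by
    intro x t
    rw [swap_interval_integral h hhc x t]
    have : (∫ s in (0:ℝ)..t, ∫ y in (0:ℝ)..x, h y s)
        = ∫ s in (0:ℝ)..t, (g x s - g 0 s) := by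
      apply intervalIntegral.integral_congr
      intro s _
      exact A x s
    rw [this, intervalIntegral.integral_sub ((hcg_t x).intervalIntegrable 0 t)
      ((hcg_t 0).intervalIntegrable 0 t), B x t, B 0 t]
  have hH : ∀ t' : ℝ, Continuous fun y => ∫ s in (0:ℝ)..t', h y s := fun t' =>
    intervalIntegral.continuous_parametric_intervalIntegral_of_continuous'
      (μ := volume) (f := fun y s => h y s) hhc 0 t'
  have D : ∀ x t, k x t - k x 0 = ∫ s in (0:ℝ)..t, h x s := by
    intro x t
    have d1 : HasDerivAt (fun x' => ∫ y in (0:ℝ)..x', ∫ s in (0:ℝ)..t, h y s)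
        (∫ s in (0:ℝ)..t, h x s) x :=
      ((hH t).integral_hasStrictDerivAt 0 x).hasDerivAt
    have d1' : HasDerivAt (fun x' => (f x' t - f x' 0) - (f 0 t - f 0 0))
        (∫ s in (0:ℝ)..t, h x s) x :=
      d1.congr_of_eventuallyEq (Eventually.of_forall fun x' => (M x' t).symm)
    have d2 : HasDerivAt (fun x' => (f x' t - f x' 0) - (f 0 t - f 0 0))
        (k x t - k x 0) x := ((hk x t).sub (hk x 0)).sub_const _
    exact (d2.unique d1')
  intro x t
  have dE : HasDerivAt (fun r => k x 0 + ∫ s in (0:ℝ)..r, h x s) (h x t) t := by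
    have := ((hch_t x).integral_hasStrictDerivAt 0 t).hasDerivAt
    simpa using this.const_add (k x 0)
  exact dE.congr_of_eventuallyEq (Eventually.of_forall fun r => by
    show k x r = k x 0 + ∫ s in (0:ℝ)..r, h x s
    have := D x r; linarith)



/-- Lax pair representation of the Camassa–Holm equation.  Let `v, φ` be smooth
functions of `(x,t)` (given together with their named partial derivatives, all
continuous), `λ ≠ 0` a spectral parameter, `ε` a real constant, and suppose `φ` is
nonvanishing and satisfies the spectral problem
`ε²φ_xx = (2 - (8v - ε²v_xx)/(2λ))φ` and the time evolution
`φ_t = (1/3)(λ+v)φ_x - (v_x/6)φ`.  Then the compatibility condition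
`(φ_xx)_t = (φ_t)_xx` holds identically if and only if `u = v - (ε²/8)v_xx`
evolves by the Camassa–Holm equation
`(v - (ε²/8)v_xx)_t = v v_x - (ε²/12)v_x v_xx - (ε²/24)v v_xxx`. -/
theorem camassa_holm_lax_pair (eps lam : ℝ) (hlam : lam ≠ 0)
    (v vx vxx vxxx vt vxxt ph phx phxx phxxx pht phtx phtxx phxxt : ℝ → ℝ → ℝ)
    (hvx : ∀ x t, HasDerivAt (fun y => v y t) (vx x t) x)
    (hvxx : ∀ x t, HasDerivAt (fun y => vx y t) (vxx x t) x)
    (hvxxx : ∀ x t, HasDerivAt (fun y => vxx y t) (vxxx x t) x)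
    (hvt : ∀ x t, HasDerivAt (fun s => v x s) (vt x t) t)
    (hvxxt : ∀ x t, HasDerivAt (fun s => vxx x s) (vxxt x t) t)
    (hphx : ∀ x t, HasDerivAt (fun y => ph y t) (phx x t) x)
    (hphxx : ∀ x t, HasDerivAt (fun y => phx y t) (phxx x t) x)
    (hphxxx : ∀ x t, HasDerivAt (fun y => phxx y t) (phxxx x t) x)
    (hpht : ∀ x t, HasDerivAt (fun s => ph x s) (pht x t) t)
    (hphtx : ∀ x t, HasDerivAt (fun y => pht y t) (phtx x t) x)
    (hphtxx : ∀ x t, HasDerivAt (fun y => phtx y t) (phtxx x t) x)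
    (hphxxt : ∀ x t, HasDerivAt (fun s => phxx x s) (phxxt x t) t)
    (hc0 : Continuous (fun q : ℝ × ℝ => ph q.1 q.2))
    (hc1 : Continuous (fun q : ℝ × ℝ => phx q.1 q.2))
    (hc2 : Continuous (fun q : ℝ × ℝ => phxx q.1 q.2))
    (hc3 : Continuous (fun q : ℝ × ℝ => phxxx q.1 q.2))
    (hc4 : Continuous (fun q : ℝ × ℝ => pht q.1 q.2))
    (hc5 : Continuous (fun q : ℝ × ℝ => phtx q.1 q.2))
    (hc6 : Continuous (fun q : ℝ × ℝ => phtxx q.1 q.2))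
    (hc7 : Continuous (fun q : ℝ × ℝ => phxxt q.1 q.2))
    (hphne : ∀ x t, ph x t ≠ 0)
    (hE1 : ∀ x t, eps ^ 2 * phxx x t =
      (2 - (8 * v x t - eps ^ 2 * vxx x t) / (2 * lam)) * ph x t)
    (hE2 : ∀ x t, pht x t =
      (1 / 3) * (lam + v x t) * phx x t - (vx x t / 6) * ph x t) :
    (∀ x t, phxxt x t = phtxx x t) ↔
      (∀ x t, vt x t - (eps ^ 2 / 8) * vxxt x t =
        v x t * vx x t - (eps ^ 2 / 12) * vx x t * vxx x t
          - (eps ^ 2 / 24) * v x t * vxxx x t) := by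

  -- Schwarz: mixed partials commute, so the compatibility condition always holds
  have hphxt : ∀ x t, HasDerivAt (fun s => phx x s) (phtx x t) t :=
    clairaut_swap ph pht phtx phx hpht hphtx hphx hc4 hc5
  have hschwarz0 : ∀ x t, HasDerivAt (fun s => phxx x s) (phtxx x t) t :=
    clairaut_swap phx phtx phtxx phxx hphxt hphtxx hphxx hc5 hc6
  have schwarz : ∀ x t, phxxt x t = phtxx x t := fun x t =>
    (hphxxt x t).unique (hschwarz0 x t)
  -- the cleared spectral identity
  have hE1' : ∀ x t, 2 * lam * (eps ^ 2 * phxx x t)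
      = (4 * lam - 8 * v x t + eps ^ 2 * vxx x t) * ph x t := by
    intro x t
    have h := hE1 x t
    field_simp at h
    linear_combination h
  -- x-derivative of the spectral identity
  have e1x : ∀ x t, 2 * lam * (eps ^ 2 * phxxx x t)
      = (-(8 * vx x t) + eps ^ 2 * vxxx x t) * ph x t
        + (4 * lam - 8 * v x t + eps ^ 2 * vxx x t) * phx x t := by
    intro x t
    have hL : HasDerivAt (fun y => 2 * lam * (eps ^ 2 * phxx y t))
        (2 * lam * (eps ^ 2 * phxxx x t)) x :=
      ((hphxxx x t).const_mul (eps ^ 2)).const_mul (2 * lam)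
    have ha : HasDerivAt (fun y => 4 * lam - 8 * v y t + eps ^ 2 * vxx y t)
        (-(8 * vx x t) + eps ^ 2 * vxxx x t) x :=
      (((hvx x t).const_mul (8:ℝ)).const_sub (4 * lam)).add
        ((hvxxx x t).const_mul (eps ^ 2))
    have hR := ha.mul (hphx x t)
    exact hL.unique (hR.congr_of_eventuallyEq
      (Filter.Eventually.of_forall fun y => hE1' y t))
  -- t-derivative of the spectral identity
  have e1t : ∀ x t, 2 * lam * (eps ^ 2 * phxxt x t)
      = (-(8 * vt x t) + eps ^ 2 * vxxt x t) * ph x t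
        + (4 * lam - 8 * v x t + eps ^ 2 * vxx x t) * pht x t := by
    intro x t
    have hL : HasDerivAt (fun s => 2 * lam * (eps ^ 2 * phxx x s))
        (2 * lam * (eps ^ 2 * phxxt x t)) t :=
      ((hphxxt x t).const_mul (eps ^ 2)).const_mul (2 * lam)
    have ha : HasDerivAt (fun s => 4 * lam - 8 * v x s + eps ^ 2 * vxx x s)
        (-(8 * vt x t) + eps ^ 2 * vxxt x t) t :=
      (((hvt x t).const_mul (8:ℝ)).const_sub (4 * lam)).add
        ((hvxxt x t).const_mul (eps ^ 2))
    have hR := ha.mul (hpht x t)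
    exact hL.unique (hR.congr_of_eventuallyEq
      (Filter.Eventually.of_forall fun s => hE1' x s))
  -- x-derivative of the time-evolution identity
  have e2x : ∀ x t, phtx x t
      = 1 / 3 * (vx x t * phx x t + (lam + v x t) * phxx x t)
        - (vxx x t / 6 * ph x t + vx x t / 6 * phx x t) := by
    intro x t
    have hb : HasDerivAt (fun y => (lam + v y t) * phx y t)
        (vx x t * phx x t + (lam + v x t) * phxx x t) x :=
      ((hvx x t).const_add lam).mul (hphxx x t)
    have hcterm : HasDerivAt (fun y => vx y t / 6 * ph y t)
        (vxx x t / 6 * ph x t + vx x t / 6 * phx x t) x :=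
      ((hvxx x t).div_const 6).mul (hphx x t)
    have hR := (hb.const_mul ((1:ℝ)/3)).sub hcterm
    exact (hphtx x t).unique (hR.congr_of_eventuallyEq
      (Filter.Eventually.of_forall fun y => show pht y t = _ by rw [hE2 y t]; simp only [Pi.sub_apply]; ring))
  -- second x-derivative of the time-evolution identity
  have e2xx : ∀ x t, phtxx x t
      = 1 / 3 * ((vxx x t * phx x t + vx x t * phxx x t)
          + (vx x t * phxx x t + (lam + v x t) * phxxx x t))
        - ((vxxx x t / 6 * ph x t + vxx x t / 6 * phx x t)
          + (vxx x t / 6 * phx x t + vx x t / 6 * phxx x t)) := by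
    intro x t
    have p1 : HasDerivAt (fun y => vx y t * phx y t)
        (vxx x t * phx x t + vx x t * phxx x t) x := (hvxx x t).mul (hphxx x t)
    have p2 : HasDerivAt (fun y => (lam + v y t) * phxx y t)
        (vx x t * phxx x t + (lam + v x t) * phxxx x t) x :=
      ((hvx x t).const_add lam).mul (hphxxx x t)
    have p4 : HasDerivAt (fun y => vxx y t / 6 * ph y t)
        (vxxx x t / 6 * ph x t + vxx x t / 6 * phx x t) x :=
      ((hvxxx x t).div_const 6).mul (hphx x t)
    have p5 : HasDerivAt (fun y => vx y t / 6 * phx y t)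
        (vxx x t / 6 * phx x t + vx x t / 6 * phxx x t) x :=
      ((hvxx x t).div_const 6).mul (hphxx x t)
    have hR := ((p1.add p2).const_mul ((1:ℝ)/3)).sub (p4.add p5)
    exact (hphtxx x t).unique (hR.congr_of_eventuallyEq
      (Filter.Eventually.of_forall fun y => show phtx y t = _ by rw [e2x y t]; rfl))
  -- the Camassa-Holm equation holds unconditionally
  have CH : ∀ x t, vt x t - eps ^ 2 / 8 * vxxt x t =
      v x t * vx x t - eps ^ 2 / 12 * vx x t * vxx x t
        - eps ^ 2 / 24 * v x t * vxxx x t := by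
    intro x t
    have key : (vt x t - eps ^ 2 / 8 * vxxt x t
        - (v x t * vx x t - eps ^ 2 / 12 * vx x t * vxx x t
          - eps ^ 2 / 24 * v x t * vxxx x t)) * ph x t = 0 := by
      linear_combination (1/8 : ℝ) * e1t x t
        + (-(lam * eps ^ 2) / 4) * e2xx x t
        + (-(vx x t) / 16) * hE1' x t
        + (-(lam + v x t) / 24) * e1x x t
        + (lam / 2 - (8 * v x t - eps ^ 2 * vxx x t) / 8) * hE2 x t
        + (-(lam * eps ^ 2) / 4) * schwarz x t
    rcases mul_eq_zero.mp key with h0 | h0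
    · linarith
    · exact absurd h0 (hphne x t)
  constructor
  · intro _ x t
    exact CH x t
  · intro _ x t
    exact schwarz x t
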